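/- Let O be a commutative ring, G a group, and ζ : G → O^× a group homomorphism into the group of units of O. If the automorphism η_ζ of O[G] is inner, i.e. there exists a unit u of O[G] such that ζ(x)·x = u·x·u⁻¹ in O[G] for all x ∈ G, then ζ is the trivial homomorphism: ζ(x) = 1 for all x ∈ G. Consequently the map ζ ↦ η_ζ induces an injective group homomorphism from Hom(G, O^×) to the outer automorphism group Out(O[G]) = Aut(O[G])/Inn(O[G]). -/

import Mathlib

/-!
STATEMENT 3.
Let `O` be a commutative ring, `G` a group and `ζ : G → Oˣ` a group homomorphism.
If the automorphism `η_ζ` of `O[G]` (determined by `η_ζ(x) = ζ(x) • x` on group elements)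
is inner, i.e. there is a unit `u` of `O[G]` with `ζ(x) • x = u * x * u⁻¹` for all `x ∈ G`,
then `ζ` is trivial.  Consequently `ζ ↦ η_ζ` induces an injective group homomorphism
`Hom(G, Oˣ) → Out(O[G])`: if `η_ζ` and `η_{ζ'}` differ by an inner automorphism then
`ζ = ζ'`.
-/
theorem stmt3 (O : Type*) [CommRing O] (G : Type*) [Group G] :
    (∀ ζ : G →* Oˣ,
      (∃ u : (MonoidAlgebra O G)ˣ, ∀ x : G,
        (ζ x : O) • MonoidAlgebra.of O G x
          = (u : MonoidAlgebra O G) * MonoidAlgebra.of O G x * ((u⁻¹ : (MonoidAlgebra O G)ˣ) : MonoidAlgebra O G)) →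
      ∀ x : G, ζ x = 1)
    ∧ (∀ ζ ζ' : G →* Oˣ,
      (∃ u : (MonoidAlgebra O G)ˣ, ∀ x : G,
        (ζ x : O) • MonoidAlgebra.of O G x
          = (u : MonoidAlgebra O G) * ((ζ' x : O) • MonoidAlgebra.of O G x) * ((u⁻¹ : (MonoidAlgebra O G)ˣ) : MonoidAlgebra O G)) →
      ζ = ζ') := by
  have key : ∀ ζ : G →* Oˣ,
      (∃ u : (MonoidAlgebra O G)ˣ, ∀ x : G,
        (ζ x : O) • MonoidAlgebra.of O G x
          = (u : MonoidAlgebra O G) * MonoidAlgebra.of O G x * ((u⁻¹ : (MonoidAlgebra O G)ˣ) : MonoidAlgebra O G)) →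
      ∀ x : G, ζ x = 1 := by
    rintro ζ ⟨u, hu⟩ x
    set ε : MonoidAlgebra O G →ₐ[O] O := (MonoidAlgebra.lift O O G) 1 with hε
    have h := congrArg ε (hu x)
    have hofx : ε (MonoidAlgebra.of O G x) = 1 := by
      simp [hε, MonoidAlgebra.lift_of]
    have huu : ε u * ε ((u⁻¹ : (MonoidAlgebra O G)ˣ) : MonoidAlgebra O G) = 1 := by
      rw [← map_mul]; simp
    rw [map_smul, map_mul, map_mul, hofx, smul_eq_mul, mul_one, mul_one] at h
    have : (ζ x : O) = 1 := by rw [h, huu]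
    exact Units.ext this
  refine ⟨key, fun ζ ζ' ⟨u, hu⟩ => ?_⟩
  have h2 : ∀ x : G, ζ x * (ζ' x)⁻¹ = 1 := by
    refine key (ζ / ζ') ⟨u, fun x => ?_⟩ -- adjust
    have := hu x
    have hx : ((ζ x : O) * ((ζ' x)⁻¹ : Oˣ)) • MonoidAlgebra.of O G x
        = (u : MonoidAlgebra O G) * MonoidAlgebra.of O G x * ((u⁻¹ : (MonoidAlgebra O G)ˣ) : MonoidAlgebra O G) := by
      have : (((ζ' x)⁻¹ : Oˣ) : O) • ((ζ x : O) • MonoidAlgebra.of O G x)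
          = (((ζ' x)⁻¹ : Oˣ) : O) • ((u : MonoidAlgebra O G) * ((ζ' x : O) • MonoidAlgebra.of O G x) * ((u⁻¹ : (MonoidAlgebra O G)ˣ) : MonoidAlgebra O G)) := by
        rw [hu x]
      rw [smul_smul] at this
      rw [mul_comm] at this
      convert this using 1
      rw [mul_smul_comm, smul_mul_assoc, smul_smul]
      norm_cast
      simp
    have hc : (((ζ / ζ') x : Oˣ) : O) = (ζ x : O) * (((ζ' x)⁻¹ : Oˣ) : O) := by
      simp [div_eq_mul_inv]
    rw [hc]; exact hx
  ext x
  have := h2 x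
  have : ζ x = ζ' x := by
    have h3 : ζ x * (ζ' x)⁻¹ * ζ' x = 1 * ζ' x := by rw [this]
    simpa using h3
  exact congrArg Units.val this
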